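/- Let δ > 0 and r < δ²/4, and set u₋ := (δ − √(δ² − 4r))/2 and u₊ := (δ + √(δ² − 4r))/2. If u : [0,∞) → ℝ is differentiable, satisfies u'(t) = −u(t)(u(t) − δ) − r for all t ≥ 0, and u(0) > u₋, then u(t) → u₊ as t → ∞. -/

import Mathlib

open Filter

private lemma aux_tracks (s um up : ℝ) (hs : 0 < s) (hup : up = um + s) (u : ℝ → ℝ)
    (hu : ∀ t, 0 ≤ t →
      HasDerivWithinAt u (-((u t - um) * (u t - up))) (Set.Ici (0 : ℝ)) t)
    (h0 : um < u 0) : Tendsto u atTop (nhds up) := by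
  have hc : ContinuousOn u (Set.Ici 0) := fun t ht => (hu t ht).continuousWithinAt
  have ha : 0 < u 0 - um := sub_pos.mpr h0
  -- constancy of exp(st)(u-up)/(u-um) while u stays above um
  have key : ∀ t, 0 ≤ t → (∀ τ, 0 ≤ τ → τ ≤ t → um < u τ) →
      Real.exp (s * t) * (u t - up) * (u 0 - um) = (u 0 - up) * (u t - um) := by
    intro t ht hpos
    have hgc : ContinuousOn (fun τ => Real.exp (s * τ) * (u τ - up) / (u τ - um))
        (Set.Icc 0 t) := by
      apply ContinuousOn.div
      · exact ((Real.continuous_exp.comp (continuous_const.mul continuous_id)).continuousOn).mul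
          ((hc.mono Set.Icc_subset_Ici_self).sub continuousOn_const)
      · exact (hc.mono Set.Icc_subset_Ici_self).sub continuousOn_const
      · intro τ hτ; exact sub_ne_zero.mpr (hpos τ hτ.1 hτ.2).ne'
    have hderiv : ∀ x ∈ Set.Ico 0 t,
        HasDerivWithinAt (fun τ => Real.exp (s * τ) * (u τ - up) / (u τ - um)) 0
          (Set.Ici x) x := by
      intro x hx
      have hux : HasDerivWithinAt u (-((u x - um) * (u x - up))) (Set.Ici x) x :=
        (hu x hx.1).mono (Set.Ici_subset_Ici.mpr hx.1)
      have he : HasDerivAt (fun τ => Real.exp (s * τ)) (Real.exp (s * x) * (s * 1)) x :=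
        ((hasDerivAt_id x).const_mul s).exp
      have hne : u x - um ≠ 0 := sub_ne_zero.mpr (hpos x hx.1 hx.2.le).ne'
      have hd := (he.hasDerivWithinAt.mul (hux.sub_const up)).div (hux.sub_const um) hne
      refine hd.congr_deriv ?_
      rw [div_eq_zero_iff]
      left
      simp only [Pi.mul_apply]
      linear_combination (-(Real.exp (s * x) * ((u x - up) * (u x - um)))) * hup
    have hconst := constant_of_has_deriv_right_zero hgc hderiv t (Set.right_mem_Icc.mpr ht)
    have h0ne : u 0 - um ≠ 0 := ha.ne'
    have htne : u t - um ≠ 0 := sub_ne_zero.mpr (hpos t ht le_rfl).ne'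
    simp only [mul_zero, Real.exp_zero, one_mul] at hconst
    field_simp at hconst
    linear_combination hconst
  -- forward invariance: u stays above um
  have pos : ∀ t, 0 ≤ t → um < u t := by
    by_contra hcon
    push_neg at hcon
    obtain ⟨T0, hT00, hT0le⟩ := hcon
    have hBeq : {t : ℝ | 0 ≤ t ∧ u t ≤ um} = Set.Ici 0 ∩ u ⁻¹' Set.Iic um := by
      ext x; simp [Set.mem_Ici, Set.mem_Iic]
    have hBclosed : IsClosed {t : ℝ | 0 ≤ t ∧ u t ≤ um} := by
      rw [hBeq]
      exact hc.preimage_isClosed_of_isClosed isClosed_Ici isClosed_Iic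
    have hBne : {t : ℝ | 0 ≤ t ∧ u t ≤ um}.Nonempty := ⟨T0, hT00, hT0le⟩
    have hBbdd : BddBelow {t : ℝ | 0 ≤ t ∧ u t ≤ um} := ⟨0, fun x hx => hx.1⟩
    have hTB := hBclosed.csInf_mem hBne hBbdd
    set T := sInf {t : ℝ | 0 ≤ t ∧ u t ≤ um} with hTdef
    have hT0' : 0 ≤ T := hTB.1
    have hTle : u T ≤ um := hTB.2
    have hTpos : 0 < T := by
      rcases hT0'.lt_or_eq with h | h
      · exact h
      · exfalso; rw [← h] at hTle; linarith
    have hlt : ∀ τ, 0 ≤ τ → τ < T → um < u τ := by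
      intro τ h1 h2
      by_contra hle
      push_neg at hle
      exact absurd (csInf_le hBbdd ⟨h1, hle⟩) (not_le.mpr h2)
    -- pass to the limit at T
    have hmem : T ∈ closure (Set.Ico 0 T) := by
      rw [closure_Ico hTpos.ne]
      exact Set.right_mem_Icc.mpr hT0'
    haveI : (nhdsWithin T (Set.Ico 0 T)).NeBot := mem_closure_iff_nhdsWithin_neBot.mp hmem
    set F : ℝ → ℝ := fun t =>
      Real.exp (s * t) * (u t - up) * (u 0 - um) - (u 0 - up) * (u t - um) with hFdef
    have hFc : ContinuousWithinAt F (Set.Ico 0 T) T := by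
      have hFcon : ContinuousOn F (Set.Ici 0) :=
        ((((Real.continuous_exp.comp (continuous_const.mul continuous_id)).continuousOn).mul
          (hc.sub continuousOn_const)).mul continuousOn_const).sub
          (continuousOn_const.mul (hc.sub continuousOn_const))
      exact (hFcon T (Set.mem_Ici.mpr hT0')).mono (fun x hx => hx.1)
    have hF0 : ∀ x ∈ Set.Ico 0 T, F x = 0 := by
      intro x hx
      have := key x hx.1 (fun τ h1 h2 => hlt τ h1 (lt_of_le_of_lt h2 hx.2))
      simp only [hFdef]
      linarith
    have h1 : Tendsto F (nhdsWithin T (Set.Ico 0 T)) (nhds (F T)) := hFc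
    have h2 : Tendsto F (nhdsWithin T (Set.Ico 0 T)) (nhds 0) := by
      refine Tendsto.congr' ?_ tendsto_const_nhds
      filter_upwards [self_mem_nhdsWithin] with x hx
      exact (hF0 x hx).symm
    have hFT0 : F T = 0 := tendsto_nhds_unique h1 h2
    simp only [hFdef] at hFT0
    have hFT : Real.exp (s * T) * (u T - up) * (u 0 - um) = (u 0 - up) * (u T - um) := by
      linarith
    have he1 : 1 ≤ Real.exp (s * T) := Real.one_le_exp (by positivity)
    have h2' : (u T - um) * ((Real.exp (s * T) - 1) * (u 0 - um) + s)
        = Real.exp (s * T) * (u 0 - um) * s := by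
      linear_combination hFT + (Real.exp (s * T) * (u 0 - um) - (u T - um)) * hup
    have hleft : (u T - um) * ((Real.exp (s * T) - 1) * (u 0 - um) + s) ≤ 0 := by
      apply mul_nonpos_of_nonpos_of_nonneg
      · linarith
      · nlinarith [mul_nonneg (sub_nonneg.mpr he1) ha.le]
    have hright : 0 < Real.exp (s * T) * (u 0 - um) * s :=
      mul_pos (mul_pos (Real.exp_pos _) ha) hs
    linarith
  have hE : ∀ t, 0 ≤ t →
      Real.exp (s * t) * (u t - up) * (u 0 - um) = (u 0 - up) * (u t - um) :=
    fun t ht => key t ht (fun τ h1 _ => pos τ h1)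
  -- the explicit formula converges to up
  have hx : Tendsto (fun t : ℝ => Real.exp (-(s * t))) atTop (nhds 0) :=
    Real.tendsto_exp_neg_atTop_nhds_zero.comp (Tendsto.const_mul_atTop hs tendsto_id)
  have hnum : Tendsto (fun t : ℝ => up * (u 0 - um) - um * (u 0 - up) * Real.exp (-(s * t)))
      atTop (nhds (up * (u 0 - um) - um * (u 0 - up) * 0)) :=
    tendsto_const_nhds.sub (tendsto_const_nhds.mul hx)
  have hden : Tendsto (fun t : ℝ => (u 0 - um) - (u 0 - up) * Real.exp (-(s * t)))
      atTop (nhds ((u 0 - um) - (u 0 - up) * 0)) :=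
    tendsto_const_nhds.sub (tendsto_const_nhds.mul hx)
  have hlim := hnum.div hden (by simpa using ha.ne')
  have hlim' : Tendsto (fun t : ℝ =>
      (up * (u 0 - um) - um * (u 0 - up) * Real.exp (-(s * t))) /
      ((u 0 - um) - (u 0 - up) * Real.exp (-(s * t)))) atTop (nhds up) := by
    have : (up * (u 0 - um) - um * (u 0 - up) * 0) / ((u 0 - um) - (u 0 - up) * 0) = up := by
      rw [mul_zero, mul_zero, sub_zero, sub_zero, mul_div_assoc, div_self ha.ne', mul_one]
    rwa [this] at hlim
  refine hlim'.congr' ?_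
  filter_upwards [eventually_ge_atTop (0 : ℝ)] with t ht
  have hEt := hE t ht
  have hx0 : 0 < Real.exp (-(s * t)) := Real.exp_pos _
  have hx1 : Real.exp (-(s * t)) ≤ 1 := by
    have h := Real.exp_le_exp.mpr (neg_nonpos.mpr (mul_nonneg hs.le ht))
    rwa [Real.exp_zero] at h
  have h1 : Real.exp (s * t) * Real.exp (-(s * t)) = 1 := by
    rw [← Real.exp_add]; simp
  have hdenpos : 0 < (u 0 - um) - (u 0 - up) * Real.exp (-(s * t)) := by
    nlinarith [mul_pos hs hx0, mul_nonneg ha.le (sub_nonneg.mpr hx1)]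
  have heq : u t * ((u 0 - um) - (u 0 - up) * Real.exp (-(s * t)))
      = up * (u 0 - um) - um * (u 0 - up) * Real.exp (-(s * t)) := by
    linear_combination Real.exp (-(s * t)) * hEt - ((u t - up) * (u 0 - um)) * h1
  rw [div_eq_iff hdenpos.ne']
  linear_combination -heq

/-- Below the critical rate, every solution of `u' = −u(u − δ) − r` starting
above the unstable equilibrium `u₋` converges to the stable equilibrium `u₊`. -/
theorem unique_linear_tracks_below_critical_rate (δ r : ℝ) (hδ : 0 < δ)
    (hr : r < δ ^ 2 / 4) (u : ℝ → ℝ)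
    (hu : ∀ t : ℝ, 0 ≤ t →
      HasDerivWithinAt u (-(u t) * (u t - δ) - r) (Set.Ici (0 : ℝ)) t)
    (h0 : (δ - Real.sqrt (δ ^ 2 - 4 * r)) / 2 < u 0) :
    Tendsto u atTop (nhds ((δ + Real.sqrt (δ ^ 2 - 4 * r)) / 2)) := by
  set s := Real.sqrt (δ ^ 2 - 4 * r) with hsdef
  have hs2 : s ^ 2 = δ ^ 2 - 4 * r := Real.sq_sqrt (by nlinarith)
  have hs : 0 < s := Real.sqrt_pos.mpr (by nlinarith)
  refine aux_tracks s ((δ - s) / 2) ((δ + s) / 2) hs (by ring) u ?_ h0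
  intro t ht
  have h2 : -((u t - (δ - s) / 2) * (u t - (δ + s) / 2)) = -(u t) * (u t - δ) - r := by
    linear_combination hs2 / 4
  rw [h2]
  exact hu t ht
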